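/- Let R be a ring, K ⊆ R a subring such that R is a flat left K-module, M an R-module, and N a K-submodule of M such that the natural map N ⊗_K R → M is an isomorphism of R-modules. If M is simple as an R-module and R is faithfully flat over K, then N is a simple K-module. -/

import Mathlib

open TensorProduct MulOpposite

/-- Let `K ⊆ R` with `R` (faithfully) flat as a left `K`-module, `M` a right `R`-module,
and `N` a `K`-submodule of `M` such that the natural map `N ⊗_K R → M`, `n ⊗ r ↦ n·r`,
is an isomorphism.  If `M` is a simple `R`-module then `N` is a simple `K`-module. -/
theorem simple_base_of_induced_simple
    (K : Type*) [CommRing K] (R : Type*) [Ring R] [Algebra K R]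
    [Module.Flat K R] [Module.FaithfullyFlat K R]
    (M : Type*) [AddCommGroup M] [Module Rᵐᵒᵖ M] [Module K M]
    (hcomp : ∀ (c : K) (m : M), c • m = op (algebraMap K R c) • m)
    [IsSimpleModule Rᵐᵒᵖ M]
    (N : Submodule K M)
    (e : TensorProduct K N R ≃ₗ[K] M)
    (he : ∀ (ν : N) (r : R), e (ν ⊗ₜ[K] r) = op r • (ν : M)) :
    IsSimpleModule K N := by
  -- M is nontrivial
  have hMnt : Nontrivial M := IsSimpleModule.nontrivial Rᵐᵒᵖ M
  have hNt : Nontrivial (TensorProduct K N R) := e.toEquiv.nontrivial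
  have hNnt : Nontrivial N := by
    by_contra h
    have : Subsingleton N := not_nontrivial_iff_subsingleton.mp h
    have : Subsingleton (TensorProduct K N R) := inferInstance
    exact (not_subsingleton_iff_nontrivial.mpr hNt) this
  have : Nontrivial (Submodule K N) := ⟨⊥, ⊤, fun h => by
    obtain ⟨x, hx⟩ := exists_ne (0 : N)
    have hxmem : x ∈ (⊥ : Submodule K N) := h ▸ Submodule.mem_top
    exact hx (Submodule.mem_bot _ |>.mp hxmem)⟩
  refine (isSimpleModule_iff K N).mpr ⟨fun N' => ?_⟩
  rcases eq_or_ne N' ⊥ with hb | hb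
  · exact Or.inl hb
  · right
    -- the map φ : N' ⊗ R → M
    set f : N' →ₗ[K] N := N'.subtype with hf
    set g : TensorProduct K N' R →ₗ[K] TensorProduct K N R := LinearMap.rTensor R f with hg
    set φ : TensorProduct K N' R →ₗ[K] M := e.toLinearMap ∘ₗ g with hφ
    have hφ_tmul : ∀ (ν : N') (r : R), φ (ν ⊗ₜ[K] r) = op r • ((ν : N) : M) := by
      intro ν r
      simp only [hφ, hg, LinearMap.coe_comp, Function.comp_apply, LinearEquiv.coe_coe,
        LinearMap.rTensor_tmul, he]
      rfl
    -- the image of φ, as an Rᵐᵒᵖ-submodule of M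
    have hsmul : ∀ (s : Rᵐᵒᵖ) (x : TensorProduct K N' R),
        s • φ x ∈ LinearMap.range φ := by
      intro s x
      induction x using TensorProduct.induction_on with
      | zero => simp
      | tmul ν r =>
        refine ⟨ν ⊗ₜ[K] (r * s.unop), ?_⟩
        rw [hφ_tmul, hφ_tmul, smul_smul]
        induction s using MulOpposite.rec' with
        | h s => simp [← op_mul]
      | add a b ha hb =>
        rw [map_add, smul_add]
        exact Submodule.add_mem _ ha hb
    let Q : Submodule Rᵐᵒᵖ M :=
      { carrier := LinearMap.range φ
        add_mem' := fun ha hb => Submodule.add_mem _ ha hb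
        zero_mem' := Submodule.zero_mem _
        smul_mem' := fun s x hx => by
          obtain ⟨y, rfl⟩ := hx
          exact hsmul s y }
    -- Q is nonzero
    obtain ⟨ν, hνmem⟩ := Submodule.exists_mem_ne_zero_of_ne_bot hb
    have hQne : Q ≠ ⊥ := by
      intro hQ
      have hmem : φ ((⟨ν, hνmem.1⟩ : N') ⊗ₜ[K] 1) ∈ Q := ⟨_, rfl⟩
      rw [hQ, Submodule.mem_bot] at hmem
      rw [hφ_tmul] at hmem
      simp only [op_one, one_smul] at hmem
      exact hνmem.2 (Subtype.ext hmem)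
    have hQtop : Q = ⊤ := (eq_bot_or_eq_top Q).resolve_left hQne
    -- hence φ is surjective, hence g is surjective
    have hφsurj : Function.Surjective φ := by
      intro m
      have : m ∈ Q := hQtop ▸ Submodule.mem_top
      exact this
    have hgsurj : Function.Surjective g := by
      intro x
      obtain ⟨y, hy⟩ := hφsurj (e x)
      exact ⟨y, e.injective (by simpa [hφ] using hy)⟩
    -- cokernel argument
    set π : N →ₗ[K] N ⧸ N' := N'.mkQ with hπ
    have hπf : π ∘ₗ f = 0 := by
      ext x
      simp [hπ, hf, Submodule.Quotient.mk_eq_zero]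
    have hcomp0 : LinearMap.rTensor R π ∘ₗ g = 0 := by
      rw [hg, ← LinearMap.rTensor_comp, hπf, LinearMap.rTensor_zero]
    have hπT0 : LinearMap.rTensor R π = 0 := by
      refine LinearMap.ext fun x => ?_
      obtain ⟨y, rfl⟩ := hgsurj x
      simpa using congrFun (congrArg DFunLike.coe hcomp0) y
    have hπ0 : π = 0 := (Module.FaithfullyFlat.zero_iff_rTensor_zero K R π).mpr hπT0
    -- conclude N' = ⊤
    rw [eq_top_iff]
    intro x _
    have : π x = 0 := by rw [hπ0]; rfl
    rwa [hπ, Submodule.mkQ_apply, Submodule.Quotient.mk_eq_zero] at this
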